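/- Let F : ℝⁿ → ℝⁿ be the deterministic Shapley operator F = A^♯ ∘ B associated with matrices A, B ∈ T^{m×n} whose finite entries are integers, every column of A and every row of B having at least one finite entry, i.e., F(x)_j = min_{i : A_{ij} ≠ −∞} ( −A_{ij} + max_{h : B_{ih} ≠ −∞} ( B_{ih} + x_h ) ). Let W := max{ |A_{ij} − B_{ih}| : A_{ij} ≠ −∞, B_{ih} ≠ −∞ } (the maximizing set being assumed nonempty). Suppose there exists v₀ ∈ ℝⁿ and ρ ∈ ℝ with F(v₀) = ρ + v₀. Then inf{ ‖u‖_H : u ∈ ℝⁿ, F(u) = ρ + u } ≤ (n − 1) · ( |ρ| + W ). -/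

import Mathlib

noncomputable section

variable {m n : ℕ}

/-- The real value of a finite element of `T = ℝ ∪ {-∞}` (junk value `0` at `-∞`). -/
def sval (a : WithBot ℝ) : ℝ := a.unbotD 0

/-- The deterministic Shapley operator `F = A^♯ ∘ B : ℝⁿ → ℝⁿ`,
`F(x)_j = min_{i : A_{ij} ≠ -∞} ( -A_{ij} + max_{h : B_{ih} ≠ -∞} ( B_{ih} + x_h ) )`. -/
def dshapley (A B : Fin m → Fin n → WithBot ℝ) (x : Fin n → ℝ) : Fin n → ℝ := fun j =>
  sInf {r : ℝ | ∃ i, A i j ≠ ⊥ ∧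
    r = - sval (A i j) + sSup {s : ℝ | ∃ h, B i h ≠ ⊥ ∧ s = sval (B i h) + x h}}

/-- `W = max { |A_{ij} - B_{ih}| : A_{ij} ≠ -∞, B_{ih} ≠ -∞ }`. -/
def maxW (A B : Fin m → Fin n → WithBot ℝ) : ℝ :=
  sSup {w : ℝ | ∃ i j h, A i j ≠ ⊥ ∧ B i h ≠ ⊥ ∧ w = |sval (A i j) - sval (B i h)|}

/-- Hilbert's seminorm `‖x‖_H = max_i x_i - min_i x_i` on `ℝⁿ`. -/
def hnorm (x : Fin n → ℝ) : ℝ := (⨆ i, x i) - (⨅ i, x i)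

/-! ### Auxiliary machinery -/

/-- The inner set `{ B_{ih} + x_h : B_{ih} ≠ -∞ }`. -/
def innS (B : Fin m → Fin n → WithBot ℝ) (x : Fin n → ℝ) (i : Fin m) : Set ℝ :=
  {s : ℝ | ∃ h, B i h ≠ ⊥ ∧ s = sval (B i h) + x h}

/-- Its supremum. -/
def innV (B : Fin m → Fin n → WithBot ℝ) (x : Fin n → ℝ) (i : Fin m) : ℝ := sSup (innS B x i)

/-- The outer set. -/
def outS (A B : Fin m → Fin n → WithBot ℝ) (x : Fin n → ℝ) (j : Fin n) : Set ℝ :=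
  {r : ℝ | ∃ i, A i j ≠ ⊥ ∧ r = - sval (A i j) + innV B x i}

lemma dshapley_eq (A B : Fin m → Fin n → WithBot ℝ) (x : Fin n → ℝ) (j : Fin n) :
    dshapley A B x j = sInf (outS A B x j) := rfl

lemma innS_fin (B : Fin m → Fin n → WithBot ℝ) (x : Fin n → ℝ) (i : Fin m) :
    (innS B x i).Finite := by
  apply (Set.finite_range (fun h : Fin n => sval (B i h) + x h)).subset
  rintro s ⟨h, -, rfl⟩
  exact ⟨h, rfl⟩

lemma outS_fin (A B : Fin m → Fin n → WithBot ℝ) (x : Fin n → ℝ) (j : Fin n) :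
    (outS A B x j).Finite := by
  apply (Set.finite_range (fun i : Fin m => - sval (A i j) + innV B x i)).subset
  rintro r ⟨i, -, rfl⟩
  exact ⟨i, rfl⟩

lemma innS_ne (B : Fin m → Fin n → WithBot ℝ) (x : Fin n → ℝ) (i : Fin m)
    (hB : ∃ h, B i h ≠ ⊥) : (innS B x i).Nonempty := by
  obtain ⟨h, hb⟩ := hB
  exact ⟨_, h, hb, rfl⟩

lemma le_innV (B : Fin m → Fin n → WithBot ℝ) (x : Fin n → ℝ) {i : Fin m} {h : Fin n}
    (hb : B i h ≠ ⊥) : sval (B i h) + x h ≤ innV B x i :=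
  le_csSup (innS_fin B x i).bddAbove ⟨h, hb, rfl⟩

lemma innV_le (B : Fin m → Fin n → WithBot ℝ) (x : Fin n → ℝ) {i : Fin m}
    (hB : ∃ h, B i h ≠ ⊥) {c : ℝ}
    (hc : ∀ h, B i h ≠ ⊥ → sval (B i h) + x h ≤ c) : innV B x i ≤ c := by
  apply csSup_le (innS_ne B x i hB)
  rintro s ⟨h, hb, rfl⟩
  exact hc h hb

lemma innV_mem (B : Fin m → Fin n → WithBot ℝ) (x : Fin n → ℝ) {i : Fin m}
    (hB : ∃ h, B i h ≠ ⊥) :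
    ∃ h, B i h ≠ ⊥ ∧ innV B x i = sval (B i h) + x h :=
  (innS_ne B x i hB).csSup_mem (innS_fin B x i)

lemma dsh_le (A B : Fin m → Fin n → WithBot ℝ) (x : Fin n → ℝ) {i : Fin m} {j : Fin n}
    (ha : A i j ≠ ⊥) : dshapley A B x j ≤ - sval (A i j) + innV B x i := by
  rw [dshapley_eq]
  exact csInf_le (outS_fin A B x j).bddBelow ⟨i, ha, rfl⟩

lemma le_dsh (A B : Fin m → Fin n → WithBot ℝ) (x : Fin n → ℝ) {j : Fin n}
    (hA : ∃ i, A i j ≠ ⊥) {c : ℝ}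
    (hc : ∀ i, A i j ≠ ⊥ → c ≤ - sval (A i j) + innV B x i) : c ≤ dshapley A B x j := by
  rw [dshapley_eq]
  apply le_csInf (by obtain ⟨i, ha⟩ := hA; exact ⟨_, i, ha, rfl⟩)
  rintro r ⟨i, ha, rfl⟩
  exact hc i ha

lemma dsh_mem (A B : Fin m → Fin n → WithBot ℝ) (x : Fin n → ℝ) {j : Fin n}
    (hA : ∃ i, A i j ≠ ⊥) :
    ∃ i, A i j ≠ ⊥ ∧ dshapley A B x j = - sval (A i j) + innV B x i := by
  rw [dshapley_eq]
  apply Set.Nonempty.csInf_mem _ (outS_fin A B x j)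
  obtain ⟨i, ha⟩ := hA
  exact ⟨_, i, ha, rfl⟩

lemma innV_mono (B : Fin m → Fin n → WithBot ℝ) {x y : Fin n → ℝ} (i : Fin m)
    (hB : ∃ h, B i h ≠ ⊥) (hxy : ∀ h, x h ≤ y h) : innV B x i ≤ innV B y i := by
  apply innV_le B x hB
  intro h hb
  exact le_trans (by linarith [hxy h]) (le_innV B y hb)

lemma innV_le_add (B : Fin m → Fin n → WithBot ℝ) {x y : Fin n → ℝ} (i : Fin m)
    (hB : ∃ h, B i h ≠ ⊥) {δ : ℝ} (hxy : ∀ h, y h ≤ x h + δ) :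
    innV B y i ≤ innV B x i + δ := by
  apply innV_le B y hB
  intro h hb
  have := le_innV B x hb
  linarith [hxy h]

/-! ### The gap-raising step -/

/-- Raising the low coordinates across a gap wider than `K` preserves the bias property. -/
lemma step (A B : Fin m → Fin n → WithBot ℝ)
    (hAcol : ∀ j, ∃ i, A i j ≠ ⊥) (hBrow : ∀ i, ∃ h, B i h ≠ ⊥)
    {ρ K : ℝ} (hK0 : 0 ≤ K)
    (hw : ∀ i j h, A i j ≠ ⊥ → B i h ≠ ⊥ → |ρ + sval (A i j) - sval (B i h)| ≤ K)
    {u : Fin n → ℝ} (hu : ∀ j, dshapley A B u j = ρ + u j)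
    {θ g : ℝ} (hgK : K < g)
    (hcov : ∀ j, u j ≤ θ ∨ θ + g ≤ u j) :
    ∀ j, dshapley A B (fun j' => if u j' ≤ θ then u j' + (g - K) else u j') j
      = ρ + (if u j ≤ θ then u j + (g - K) else u j) := by
  intro j
  set δ : ℝ := g - K with hδ
  have hδ0 : 0 < δ := by simp [hδ]; linarith
  set u' : Fin n → ℝ := fun j' => if u j' ≤ θ then u j' + δ else u j' with hu'
  have hle : ∀ h, u h ≤ u' h := by
    intro h; simp only [hu']; split <;> linarith
  have hle' : ∀ h, u' h ≤ u h + δ := by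
    intro h; simp only [hu']; split <;> linarith
  by_cases hj : u j ≤ θ
  · -- low case
    simp only [hj, if_pos]
    apply le_antisymm
    · obtain ⟨i, ha, hi⟩ := dsh_mem A B u (hAcol j)
      rw [hu j] at hi
      calc dshapley A B u' j ≤ - sval (A i j) + innV B u' i := dsh_le A B u' ha
        _ ≤ - sval (A i j) + (innV B u i + δ) := by
            linarith [innV_le_add B i (hBrow i) hle']
        _ = ρ + (u j + δ) := by linarith
    · apply le_dsh A B u' (hAcol j)
      intro i ha
      have hI : ρ + u j ≤ - sval (A i j) + innV B u i := by
        rw [← hu j]; exact dsh_le A B u ha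
      obtain ⟨h, hb, hV⟩ := innV_mem B u (hBrow i)
      rcases hcov h with hL | hH
      · -- the maximizer is low: the inner value rises by δ
        have : innV B u i + δ ≤ innV B u' i := by
          rw [hV]
          have : sval (B i h) + u' h = sval (B i h) + u h + δ := by
            simp only [hu', if_pos hL]; ring
          linarith [le_innV B u' hb]
        linarith
      · -- the maximizer is high
        have hw' := abs_le.mp (hw i j h ha hb)
        have : sval (B i h) + u' h ≤ innV B u' i := le_innV B u' hb
        have hu'h : u h ≤ u' h := hle h
        have : ρ + (u j + δ) ≤ - sval (A i j) + (sval (B i h) + u h) := by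
          simp only [hδ]; linarith [hw'.1]
        linarith [le_innV B u' hb, hle h]
  · -- high case
    simp only [hj, if_neg, not_false_iff]
    have hjH : θ + g ≤ u j := (hcov j).resolve_left hj
    apply le_antisymm
    · obtain ⟨i, ha, hi⟩ := dsh_mem A B u (hAcol j)
      rw [hu j] at hi
      have hVle : innV B u' i ≤ innV B u i := by
        apply innV_le B u' (hBrow i)
        intro h hb
        by_cases hL : u h ≤ θ
        · have hw' := abs_le.mp (hw i j h ha hb)
          have hIV : innV B u i = ρ + u j + sval (A i j) := by linarith
          have : sval (B i h) + u' h = sval (B i h) + u h + δ := by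
            simp only [hu', if_pos hL]; ring
          rw [hIV]
          simp only [hδ] at this ⊢
          linarith [hw'.2]
        · have : u' h = u h := by simp only [hu', if_neg hL]
          rw [this]
          exact le_innV B u hb
      calc dshapley A B u' j ≤ - sval (A i j) + innV B u' i := dsh_le A B u' ha
        _ ≤ - sval (A i j) + innV B u i := by linarith
        _ = ρ + u j := by linarith
    · apply le_dsh A B u' (hAcol j)
      intro i ha
      have hI : ρ + u j ≤ - sval (A i j) + innV B u i := by
        rw [← hu j]; exact dsh_le A B u ha
      have := innV_mono B i (hBrow i) hle
      linarith

/-! ### Climbing lemma -/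

lemma climb {K : ℝ} (hK0 : 0 ≤ K) :
    ∀ (N : ℕ) (S : Finset ℝ) (hne : S.Nonempty), S.card ≤ N →
    (∀ v ∈ S, v < S.max' hne → ∃ v' ∈ S, v < v' ∧ v' ≤ v + K) →
    S.max' hne ≤ S.min' hne + ((S.card : ℝ) - 1) * K := by
  intro N
  induction N with
  | zero =>
    intro S hne hcard _
    exact absurd (Finset.card_pos.mpr hne) (by omega)
  | succ N ih =>
    intro S hne hcard H
    have hc1 : 1 ≤ S.card := Finset.card_pos.mpr hne
    have hc1' : (1 : ℝ) ≤ (S.card : ℝ) := by exact_mod_cast hc1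
    by_cases hlt : S.max' hne ≤ S.min' hne
    · nlinarith
    · push_neg at hlt
      obtain ⟨v', hv'S, hlt', hle'⟩ := H (S.min' hne) (S.min'_mem hne) hlt
      set T : Finset ℝ := S.filter (fun x => S.min' hne < x) with hT
      have hv'T : v' ∈ T := by
        rw [hT, Finset.mem_filter]; exact ⟨hv'S, hlt'⟩
      have hTne : T.Nonempty := ⟨v', hv'T⟩
      have hTsub : T ⊆ S := Finset.filter_subset _ _
      have hmin_not : S.min' hne ∉ T := by
        rw [hT, Finset.mem_filter]
        exact fun hmem => lt_irrefl _ hmem.2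
      have hTcard : T.card < S.card :=
        Finset.card_lt_card ⟨hTsub, fun hsub => hmin_not (hsub (S.min'_mem hne))⟩
      have hmaxT : T.max' hTne = S.max' hne := by
        apply le_antisymm (Finset.max'_subset hTne hTsub)
        apply Finset.le_max'
        exact Finset.mem_filter.mpr ⟨S.max'_mem hne, hlt⟩
      have H' : ∀ v ∈ T, v < T.max' hTne → ∃ v'' ∈ T, v < v'' ∧ v'' ≤ v + K := by
        intro v hvT hvlt
        rw [hmaxT] at hvlt
        obtain ⟨v'', hv''S, h1, h2⟩ := H v (hTsub hvT) hvlt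
        refine ⟨v'', ?_, h1, h2⟩
        rw [hT, Finset.mem_filter]
        have : S.min' hne < v := (Finset.mem_filter.mp hvT).2
        exact ⟨hv''S, lt_trans this h1⟩
      have hIH := ih T hTne (by omega) H'
      have hminT : T.min' hTne ≤ v' := Finset.min'_le _ _ hv'T
      have hcast : (T.card : ℝ) + 1 ≤ (S.card : ℝ) := by exact_mod_cast hTcard
      have hTc1 : (1 : ℝ) ≤ (T.card : ℝ) := by exact_mod_cast Finset.card_pos.mpr hTne
      rw [← hmaxT]
      nlinarith

lemma hnorm_eq_max_min (u : Fin n → ℝ)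
    (hne : (Finset.image u Finset.univ).Nonempty) :
    hnorm u = (Finset.image u Finset.univ).max' hne - (Finset.image u Finset.univ).min' hne := by
  have hrange : Set.range u = ↑(Finset.image u Finset.univ) := by
    rw [Finset.coe_image, Finset.coe_univ, Set.image_univ]
  have h0 : hnorm u = sSup (Set.range u) - sInf (Set.range u) := rfl
  rw [h0, hrange, hne.csSup_eq_max', hne.csInf_eq_min']

/-! ### Main induction -/

lemma main_ind (A B : Fin m → Fin n → WithBot ℝ)
    (hAcol : ∀ j, ∃ i, A i j ≠ ⊥) (hBrow : ∀ i, ∃ h, B i h ≠ ⊥)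
    (hn : 0 < n)
    {ρ K : ℝ} (hK0 : 0 ≤ K)
    (hw : ∀ i j h, A i j ≠ ⊥ → B i h ≠ ⊥ → |ρ + sval (A i j) - sval (B i h)| ≤ K) :
    ∀ (N : ℕ) (u : Fin n → ℝ), (∀ j, dshapley A B u j = ρ + u j) →
    (Finset.univ.filter (fun p : Fin n × Fin n => u p.1 + K < u p.2)).card ≤ N →
    ∃ u' : Fin n → ℝ, (∀ j, dshapley A B u' j = ρ + u' j) ∧ hnorm u' ≤ ((n : ℝ) - 1) * K := by
  have : Nonempty (Fin n) := ⟨⟨0, hn⟩⟩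
  intro N
  induction N with
  | zero =>
    intro u hu hcard
    -- we show the climbing hypothesis must hold, else card ≥ 1
    refine ⟨u, hu, ?_⟩
    set S : Finset ℝ := Finset.univ.image u with hS
    have hne : S.Nonempty := ⟨u ⟨0, hn⟩, Finset.mem_image_of_mem u (Finset.mem_univ _)⟩
    have H : ∀ v ∈ S, v < S.max' hne → ∃ v' ∈ S, v < v' ∧ v' ≤ v + K := by
      by_contra Hc
      push_neg at Hc
      obtain ⟨v, hvS, hvlt, hgap⟩ := Hc
      -- a pair with gap > K exists
      obtain ⟨j1, -, hj1⟩ := Finset.mem_image.mp hvS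
      obtain ⟨j2, -, hj2⟩ := Finset.mem_image.mp (S.max'_mem hne)
      have hpair : (j1, j2) ∈ Finset.univ.filter
          (fun p : Fin n × Fin n => u p.1 + K < u p.2) := by
        rw [Finset.mem_filter]
        refine ⟨Finset.mem_univ _, ?_⟩
        have := hgap (S.max' hne) (S.max'_mem hne) hvlt
        simp only [hj1, hj2]
        linarith
      have : 0 < (Finset.univ.filter
          (fun p : Fin n × Fin n => u p.1 + K < u p.2)).card :=
        Finset.card_pos.mpr ⟨_, hpair⟩
      omega
    -- conclude via climb
    have hclimb := climb hK0 S.card S hne le_rfl H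
    have hcardn : S.card ≤ n := by
      calc S.card ≤ Finset.univ.card := Finset.card_image_le
        _ = n := by simp
    have hcastn : ((S.card : ℝ) - 1) ≤ (n : ℝ) - 1 := by
      have : (S.card : ℝ) ≤ (n : ℝ) := by exact_mod_cast hcardn
      linarith
    have hhe := hnorm_eq_max_min u hne
    rw [hhe]
    nlinarith
  | succ N ih =>
    intro u hu hcard
    set S : Finset ℝ := Finset.univ.image u with hS
    have hne : S.Nonempty := ⟨u ⟨0, hn⟩, Finset.mem_image_of_mem u (Finset.mem_univ _)⟩
    by_cases H : ∀ v ∈ S, v < S.max' hne → ∃ v' ∈ S, v < v' ∧ v' ≤ v + K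
    · -- climbing works: done
      refine ⟨u, hu, ?_⟩
      have hclimb := climb hK0 S.card S hne le_rfl H
      have hcardn : S.card ≤ n := by
        calc S.card ≤ Finset.univ.card := Finset.card_image_le
          _ = n := by simp
      have hcastn : (S.card : ℝ) ≤ (n : ℝ) := by exact_mod_cast hcardn
      have hhe := hnorm_eq_max_min u hne
      rw [hhe]
      have hcastn1 : ((S.card : ℝ) - 1) ≤ (n : ℝ) - 1 := by linarith
      nlinarith
    · push_neg at H
      obtain ⟨θ, hθS, hθlt, hgap⟩ := H
      -- the set of high values
      set T : Finset ℝ := S.filter (fun x => θ < x) with hT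
      have hTne : T.Nonempty := by
        refine ⟨S.max' hne, ?_⟩
        rw [hT, Finset.mem_filter]
        exact ⟨S.max'_mem hne, hθlt⟩
      set g : ℝ := T.min' hTne - θ with hg
      have hminT_mem : T.min' hTne ∈ T := T.min'_mem hTne
      have hminT_S : T.min' hTne ∈ S := (Finset.filter_subset _ _) hminT_mem
      have hminT_gt : θ < T.min' hTne := (Finset.mem_filter.mp hminT_mem).2
      have hgK : K < g := by
        have := hgap (T.min' hTne) hminT_S hminT_gt
        rw [hg]; linarith
      have hcov : ∀ j, u j ≤ θ ∨ θ + g ≤ u j := by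
        intro j
        by_cases hL : u j ≤ θ
        · exact Or.inl hL
        · push_neg at hL
          have hjT : u j ∈ T := by
            rw [hT, Finset.mem_filter]
            exact ⟨Finset.mem_image_of_mem u (Finset.mem_univ _), hL⟩
          right
          have := T.min'_le _ hjT
          rw [hg]; linarith
      set u' : Fin n → ℝ := fun j' => if u j' ≤ θ then u j' + (g - K) else u j' with hu'
      have hu'bias : ∀ j, dshapley A B u' j = ρ + u' j :=
        step A B hAcol hBrow hK0 hw hu hgK hcov
      -- card decreases
      have hδ0 : 0 < g - K := by linarith
      obtain ⟨j1, -, hj1⟩ := Finset.mem_image.mp hθS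
      obtain ⟨j2, -, hj2⟩ := Finset.mem_image.mp hminT_S
      have hj2v : u j2 = θ + g := by rw [hj2, hg]; ring
      set P := fun (v : Fin n → ℝ) =>
        Finset.univ.filter (fun p : Fin n × Fin n => v p.1 + K < v p.2) with hP
      have hsub : P u' ⊆ P u := by
        intro p hp
        rw [hP, Finset.mem_filter] at hp ⊢
        refine ⟨Finset.mem_univ _, ?_⟩
        have hp2 := hp.2
        by_cases h1 : u p.1 ≤ θ <;> by_cases h2 : u p.2 ≤ θ
        · simp only [hu', if_pos h1, if_pos h2] at hp2; linarith
        · simp only [hu', if_pos h1, if_neg h2] at hp2; linarith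
        · -- p.1 high, p.2 low: impossible
          exfalso
          have hp1H : θ + g ≤ u p.1 := (hcov p.1).resolve_left h1
          simp only [hu', if_neg h1, if_pos h2] at hp2
          linarith
        · simp only [hu', if_neg h1, if_neg h2] at hp2; linarith
      have hmem_old : (j1, j2) ∈ P u := by
        rw [hP, Finset.mem_filter]
        refine ⟨Finset.mem_univ _, ?_⟩
        simp only [hj1, hj2v]
        linarith
      have hmem_new : (j1, j2) ∉ P u' := by
        simp only [hP, Finset.mem_filter]
        push_neg
        intro _
        have h1 : u j1 ≤ θ := le_of_eq hj1
        have h2 : ¬ u j2 ≤ θ := by rw [hj2v]; linarith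
        simp only [hu', if_pos h1, if_neg h2, hj1, hj2v]
        linarith
      have hcard' : (P u').card < (P u).card :=
        Finset.card_lt_card ⟨hsub, fun hsub' => hmem_new (hsub' hmem_old)⟩
      apply ih u' hu'bias
      simp only [hP] at hcard'
      omega

/-! ### Main theorem -/

/-- For deterministic games, the minimal Hilbert seminorm of a bias vector is at most
`(n - 1)(|ρ| + W)`. -/
theorem stmt14 (A B : Fin m → Fin n → WithBot ℝ)
    (hAcol : ∀ j, ∃ i, A i j ≠ ⊥)
    (hBrow : ∀ i, ∃ h, B i h ≠ ⊥)
    (hAint : ∀ i j, A i j = ⊥ ∨ ∃ z : ℤ, A i j = ((z : ℝ) : WithBot ℝ))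
    (hBint : ∀ i h, B i h = ⊥ ∨ ∃ z : ℤ, B i h = ((z : ℝ) : WithBot ℝ))
    (hWne : ∃ (i : Fin m) (j : Fin n) (h : Fin n), A i j ≠ ⊥ ∧ B i h ≠ ⊥)
    (v₀ : Fin n → ℝ) (ρ : ℝ)
    (hbias₀ : dshapley A B v₀ = fun j => ρ + v₀ j) :
    sInf {c : ℝ | ∃ u : Fin n → ℝ, dshapley A B u = (fun j => ρ + u j) ∧ c = hnorm u} ≤
      ((n : ℝ) - 1) * (|ρ| + maxW A B) := by
  obtain ⟨i₀, j₀, h₀, ha₀, hb₀⟩ := hWne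
  have hn : 0 < n := j₀.pos
  have : Nonempty (Fin n) := ⟨⟨0, hn⟩⟩
  -- the W-set is bounded above
  have hWfin : {w : ℝ | ∃ i j h, A i j ≠ ⊥ ∧ B i h ≠ ⊥ ∧
      w = |sval (A i j) - sval (B i h)|}.Finite := by
    apply (Set.finite_range (fun p : Fin m × Fin n × Fin n =>
      |sval (A p.1 p.2.1) - sval (B p.1 p.2.2)|)).subset
    rintro w ⟨i, j, h, -, -, rfl⟩
    exact ⟨(i, j, h), rfl⟩
  have hWle : ∀ i j h, A i j ≠ ⊥ → B i h ≠ ⊥ →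
      |sval (A i j) - sval (B i h)| ≤ maxW A B := by
    intro i j h ha hb
    exact le_csSup hWfin.bddAbove ⟨i, j, h, ha, hb, rfl⟩
  have hW0 : 0 ≤ maxW A B :=
    le_trans (abs_nonneg _) (hWle i₀ j₀ h₀ ha₀ hb₀)
  set K : ℝ := |ρ| + maxW A B with hK
  have hK0 : 0 ≤ K := by rw [hK]; positivity
  have hw : ∀ i j h, A i j ≠ ⊥ → B i h ≠ ⊥ →
      |ρ + sval (A i j) - sval (B i h)| ≤ K := by
    intro i j h ha hb
    calc |ρ + sval (A i j) - sval (B i h)|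
        = |ρ + (sval (A i j) - sval (B i h))| := by ring_nf
      _ ≤ |ρ| + |sval (A i j) - sval (B i h)| := abs_add_le _ _
      _ ≤ |ρ| + maxW A B := by linarith [hWle i j h ha hb]
  have hv₀ : ∀ j, dshapley A B v₀ j = ρ + v₀ j := fun j => congrFun hbias₀ j
  obtain ⟨u', hu'bias, hu'norm⟩ := main_ind A B hAcol hBrow hn hK0 hw
    (Finset.univ.filter (fun p : Fin n × Fin n => v₀ p.1 + K < v₀ p.2)).card v₀ hv₀ le_rfl
  have hmem : hnorm u' ∈ {c : ℝ | ∃ u : Fin n → ℝ,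
      dshapley A B u = (fun j => ρ + u j) ∧ c = hnorm u} :=
    ⟨u', funext hu'bias, rfl⟩
  have hbdd : BddBelow {c : ℝ | ∃ u : Fin n → ℝ,
      dshapley A B u = (fun j => ρ + u j) ∧ c = hnorm u} := by
    refine ⟨0, ?_⟩
    rintro c ⟨u, -, rfl⟩
    have h1 : (⨅ i, u i) ≤ u ⟨0, hn⟩ := ciInf_le (Set.finite_range u).bddBelow _
    have h2 : u ⟨0, hn⟩ ≤ ⨆ i, u i := le_ciSup (Set.finite_range u).bddAbove _
    rw [hnorm]; linarith
  exact le_trans (csInf_le hbdd hmem) hu'norm
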